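/- There exist constants $C_0,C_1,C_2>0$ depending only on $\rho_0^\pm,P_\pm,g,m,\ell$ such that for all $|\xi|\ge C_0$, the variational eigenvalue $\lambda(|\xi|)=\sqrt{-\inf_{\mathcal{A}}E}$ satisfies $\lambda^2(|\xi|)\ge C_1|\xi|-C_2$. Combined with the lower bound $E\ge -g|\xi|$, this gives $0<C\le\lambda(|\xi|)/\sqrt{|\xi|}\le\sqrt{g}$ for all sufficiently large $|\xi|$. -/

import Mathlib

open Set

def RTAdm (m ℓ : ℝ) (φ ψ : ℝ → ℝ) : Prop :=
  ContinuousOn ψ (Icc (-m) ℓ) ∧ ψ (-m) = 0 ∧ ψ ℓ = 0 ∧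
  (∀ x ∈ Ioo (-m) ℓ, x ≠ 0 → DifferentiableAt ℝ ψ x) ∧
  IntervalIntegrable (fun x => (φ x) ^ 2) MeasureTheory.volume (-m) ℓ ∧
  IntervalIntegrable (fun x => (deriv ψ x) ^ 2) MeasureTheory.volume (-m) ℓ

/-- `E_ξ(φ,ψ)` with `Q = P'(ρ₀)` evaluated along the steady state. -/
noncomputable def RTEnergy (m ℓ g ξ : ℝ) (ρ0 Q : ℝ → ℝ) (φ ψ : ℝ → ℝ) : ℝ :=
  (1 / 2) * ∫ x in (-m)..ℓ,
    (Q x * ρ0 x * (deriv ψ x + ξ * φ x) ^ 2 - 2 * g * ρ0 x * ξ * ψ x * φ x)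

noncomputable def RTConstraint (m ℓ : ℝ) (ρ0 : ℝ → ℝ) (φ ψ : ℝ → ℝ) : ℝ :=
  (1 / 2) * ∫ x in (-m)..ℓ, ρ0 x * ((φ x) ^ 2 + (ψ x) ^ 2)

/-- The set of energy values on the constraint set `𝒜`, for frequency `ξ`;
`-λ²(ξ)` is its infimum. -/
def RTEnergyValues (m ℓ g ξ : ℝ) (ρ0 Q : ℝ → ℝ) : Set ℝ :=
  {e : ℝ | ∃ φ ψ : ℝ → ℝ, RTAdm m ℓ φ ψ ∧ RTConstraint m ℓ ρ0 φ ψ = 1 ∧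
    e = RTEnergy m ℓ g ξ ρ0 Q φ ψ}

open Set MeasureTheory intervalIntegral Filter

lemma ae_restrict_Icc_of_Ioo' {p r : ℝ} {P : ℝ → Prop} (h : ∀ x ∈ Ioo p r, P x) :
    ∀ᵐ x ∂(MeasureTheory.volume.restrict (Icc p r)), P x := by
  have h1 : (volume : Measure ℝ).restrict (Icc p r) = volume.restrict (Ioo p r) :=
    (Measure.restrict_congr_set Ioo_ae_eq_Icc).symm
  rw [h1]
  filter_upwards [ae_restrict_mem measurableSet_Ioo] with x hx using h x hx

lemma energy_lower {m ℓ g ξ q c : ℝ} {ρ0 Q : ℝ → ℝ} (hm : 0 < m) (hℓ : 0 < ℓ)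
    (hg : 0 < g) (hξ : 0 < ξ) (hc : 0 < c) (hq : 0 < q)
    (hρ : ∀ x ∈ Ioo (-m) ℓ, c ≤ ρ0 x) (hQ : ∀ x ∈ Ioo (-m) ℓ, q ≤ Q x) :
    ∀ e ∈ RTEnergyValues m ℓ g ξ ρ0 Q, -(g * ξ) ≤ e := by
  rintro e ⟨φ, ψ, hadm, hcon, rfl⟩
  set f := fun x => Q x * ρ0 x * (deriv ψ x + ξ * φ x) ^ 2 - 2 * g * ρ0 x * ξ * ψ x * φ x with hf_def
  set B := fun x => ρ0 x * ((φ x) ^ 2 + (ψ x) ^ 2) with hB_def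
  have hBint : IntervalIntegrable B volume (-m) ℓ := by
    by_contra hB
    have h0 : ∫ x in (-m)..ℓ, B x = 0 := integral_undef hB
    rw [RTConstraint] at hcon
    rw [h0] at hcon
    norm_num at hcon
  have hBval : ∫ x in (-m)..ℓ, B x = 2 := by
    rw [RTConstraint] at hcon
    linarith
  have hptwise : ∀ x ∈ Ioo (-m) ℓ, -(g * ξ) * B x ≤ f x := by
    intro x hx
    have hQx := hQ x hx
    have hρx := hρ x hx
    have h1 : 0 ≤ Q x * ρ0 x * (deriv ψ x + ξ * φ x) ^ 2 := by
      apply mul_nonneg (mul_nonneg (by linarith) (by linarith)) (sq_nonneg _)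
    have h2 : 0 ≤ g * ξ * ρ0 x * (φ x - ψ x) ^ 2 :=
      mul_nonneg (mul_nonneg (mul_nonneg hg.le hξ.le) (by linarith)) (sq_nonneg _)
    simp only [hf_def, hB_def]
    nlinarith [h1, h2]
  by_cases hf : IntervalIntegrable f volume (-m) ℓ
  · have hBint' : IntervalIntegrable (fun x => -(g * ξ) * B x) volume (-m) ℓ :=
      hBint.const_mul _
    have hmono := integral_mono_ae_restrict (by linarith : -m ≤ ℓ) hBint' hf
      (ae_restrict_Icc_of_Ioo' hptwise)
    rw [intervalIntegral.integral_const_mul, hBval] at hmono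
    rw [RTEnergy]
    show -(g*ξ) ≤ (1/2) * ∫ x in (-m)..ℓ, f x
    linarith
  · rw [RTEnergy]
    have h0 : (∫ x in (-m)..ℓ, (Q x * ρ0 x * (deriv ψ x + ξ * φ x) ^ 2
        - 2 * g * ρ0 x * ξ * ψ x * φ x)) = 0 := integral_undef hf
    rw [h0]
    nlinarith


lemma ae_restrict_Icc_of_Ioo {p r : ℝ} {P : ℝ → Prop} (h : ∀ x ∈ Ioo p r, P x) :
    ∀ᵐ x ∂(MeasureTheory.volume.restrict (Icc p r)), P x := by
  have h1 : (volume : Measure ℝ).restrict (Icc p r) = volume.restrict (Ioo p r) :=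
    (Measure.restrict_congr_set Ioo_ae_eq_Icc).symm
  rw [h1]
  filter_upwards [ae_restrict_mem measurableSet_Ioo] with x hx using h x hx

lemma integrableOn_rho_mul {ρ0 h : ℝ → ℝ} {p r CC M : ℝ} (hpr : p ≤ r)
    (hcont : ContinuousOn ρ0 (Ioo p r)) (hbd : ∀ x ∈ Ioo p r, |ρ0 x| ≤ CC)
    (hh : Measurable h) (hM : ∀ x, |h x| ≤ M) :
    IntervalIntegrable (fun x => ρ0 x * h x) MeasureTheory.volume p r := by
  rw [intervalIntegrable_iff_integrableOn_Ioo_of_le hpr]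
  apply Integrable.mono' (g := fun _ => CC * M)
  · exact integrableOn_const measure_Ioo_lt_top.ne
  · exact ((hcont.aemeasurable measurableSet_Ioo).aestronglyMeasurable).mul
      hh.aestronglyMeasurable
  · filter_upwards [ae_restrict_mem measurableSet_Ioo] with x hx
    have h1 := hbd x hx
    have h2 := hM x
    have h3 : (0:ℝ) ≤ CC := le_trans (abs_nonneg _) h1
    calc ‖ρ0 x * h x‖ = |ρ0 x| * |h x| := by rw [Real.norm_eq_abs, abs_mul]
      _ ≤ CC * M := mul_le_mul h1 h2 (abs_nonneg _) h3

section rho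
variable {ℓ m g q C K rhoP rhoM : ℝ} {ρ0 Q : ℝ → ℝ}

lemma rho_lip (hg : 0 < g) (hq : 0 < q) (hK : K = g * C / q) {s : Set ℝ} (hs : Convex ℝ s)
    (hbd : ∀ x ∈ s, ρ0 x ≤ C) (hρpos : ∀ x ∈ s, 0 ≤ ρ0 x)
    (hQ : ∀ x ∈ s, q ≤ Q x)
    (hode : ∀ x ∈ s, HasDerivAt ρ0 (-g * ρ0 x / Q x) x) :
    ∀ u ∈ s, ∀ v ∈ s, |ρ0 u - ρ0 v| ≤ K * |u - v| := by
  intro u hu v hv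
  have hb : ∀ y ∈ s, ‖-g * ρ0 y / Q y‖ ≤ K := by
    intro y hy
    have hQy := hQ y hy
    have hQpos : 0 < Q y := lt_of_lt_of_le hq hQy
    have hρ1 := hρpos y hy
    have hρ2 := hbd y hy
    rw [Real.norm_eq_abs, abs_div, abs_of_pos hQpos, abs_of_nonpos (by nlinarith), hK]
    have hnn : -(-g * ρ0 y) = g * ρ0 y := by ring
    rw [hnn]
    exact div_le_div₀ (by nlinarith) (by nlinarith) hq hQy
  have := hs.norm_image_sub_le_of_norm_hasDerivWithin_le
    (f' := fun y => -g * ρ0 y / Q y) (fun y hy => (hode y hy).hasDerivWithinAt) hb hv hu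
  simpa [Real.norm_eq_abs] using this

lemma rho_near_right (hg : 0 < g) (hq : 0 < q) (hK : K = g * C / q) (hK0 : 0 ≤ K)
    (hbd : ∀ x ∈ Ioo (0:ℝ) ℓ, ρ0 x ≤ C) (hρpos : ∀ x ∈ Ioo (0:ℝ) ℓ, 0 ≤ ρ0 x)
    (hQ : ∀ x ∈ Ioo (0:ℝ) ℓ, q ≤ Q x)
    (hode : ∀ x ∈ Ioo (0:ℝ) ℓ, HasDerivAt ρ0 (-g * ρ0 x / Q x) x)
    (hlim : Tendsto ρ0 (nhdsWithin 0 (Ioi 0)) (nhds rhoP)) :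
    ∀ x ∈ Ioo (0:ℝ) ℓ, rhoP - K * x ≤ ρ0 x := by
  have hlip := rho_lip hg hq hK (convex_Ioo 0 ℓ) hbd hρpos hQ hode
  intro x hx
  have hev : ∀ᶠ y in nhdsWithin 0 (Ioi 0), ρ0 y ≤ ρ0 x + K * x := by
    filter_upwards [Ioo_mem_nhdsGT_of_mem (Set.mem_Ico.2 ⟨le_refl (0:ℝ), hx.1⟩)] with y hy
    have hy' : y ∈ Ioo (0:ℝ) ℓ := ⟨hy.1, hy.2.trans hx.2⟩
    have h5 : |ρ0 x - ρ0 y| ≤ K * x := by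
      have := hlip x hx y hy'
      have h6 : |x - y| = x - y := abs_of_pos (by linarith [hy.1, hy.2])
      rw [h6] at this
      calc |ρ0 x - ρ0 y| ≤ K * (x - y) := this
        _ ≤ K * x := by nlinarith [hy.1]
    have := neg_le_of_abs_le h5
    linarith
  have := le_of_tendsto hlim hev
  linarith

lemma rho_near_left (hg : 0 < g) (hq : 0 < q) (hK : K = g * C / q) (hK0 : 0 ≤ K)
    (hbd : ∀ x ∈ Ioo (-m) (0:ℝ), ρ0 x ≤ C) (hρpos : ∀ x ∈ Ioo (-m) (0:ℝ), 0 ≤ ρ0 x)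
    (hQ : ∀ x ∈ Ioo (-m) (0:ℝ), q ≤ Q x)
    (hode : ∀ x ∈ Ioo (-m) (0:ℝ), HasDerivAt ρ0 (-g * ρ0 x / Q x) x)
    (hlim : Tendsto ρ0 (nhdsWithin 0 (Iio 0)) (nhds rhoM)) :
    ∀ x ∈ Ioo (-m) (0:ℝ), ρ0 x ≤ rhoM + K * (-x) := by
  have hlip := rho_lip hg hq hK (convex_Ioo (-m) 0) hbd hρpos hQ hode
  intro x hx
  have hev : ∀ᶠ y in nhdsWithin 0 (Iio 0), ρ0 x - K * (-x) ≤ ρ0 y := by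
    filter_upwards [Ioo_mem_nhdsLT_of_mem (Set.mem_Ioc.2 ⟨hx.2, le_refl (0:ℝ)⟩)] with y hy
    have hy' : y ∈ Ioo (-m) (0:ℝ) := ⟨hx.1.trans hy.1, hy.2⟩
    have h5 : |ρ0 x - ρ0 y| ≤ K * (-x) := by
      have := hlip x hx y hy'
      have h6 : |x - y| = -(x - y) := abs_of_neg (by linarith [hy.1])
      rw [h6] at this
      calc |ρ0 x - ρ0 y| ≤ K * (-(x - y)) := this
        _ ≤ K * (-x) := by nlinarith [hy.2]
    have := le_of_abs_le h5
    linarith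
  have := ge_of_tendsto hlim hev
  linarith

end rho

lemma rho_mul_split {m ℓ c C M ξ : ℝ} {ρ0 h : ℝ → ℝ}
    (hm : 0 < m) (hℓ : 0 < ℓ) (hc : 0 < c) (hξ : 0 < ξ)
    (ham : ξ⁻¹ ≤ m) (hal : ξ⁻¹ ≤ ℓ)
    (hρbd : ∀ x ∈ Ioo (-m) ℓ, c ≤ ρ0 x ∧ ρ0 x ≤ C)
    (hcontM : ContinuousOn ρ0 (Ioo (-m) 0)) (hcontP : ContinuousOn ρ0 (Ioo 0 ℓ))
    (hh : Measurable h) (hM : ∀ x, |h x| ≤ M)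
    (hvan : ∀ x : ℝ, ξ⁻¹ ≤ |x| → h x = 0) :
    IntervalIntegrable (fun x => ρ0 x * h x) MeasureTheory.volume (-ξ⁻¹) 0 ∧
    IntervalIntegrable (fun x => ρ0 x * h x) MeasureTheory.volume 0 ξ⁻¹ ∧
    (∫ x in (-m)..ℓ, ρ0 x * h x)
      = (∫ x in (-ξ⁻¹)..(0:ℝ), ρ0 x * h x) + ∫ x in (0:ℝ)..ξ⁻¹, ρ0 x * h x := by
  have ha : 0 < ξ⁻¹ := inv_pos.mpr hξ
  have habs : ∀ x ∈ Ioo (-m) ℓ, |ρ0 x| ≤ C := by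
    intro x hx
    rcases hρbd x hx with ⟨h1, h2⟩
    rw [abs_of_nonneg (by linarith)]; exact h2
  have II1 : IntervalIntegrable (fun x => ρ0 x * h x) volume (-m) (-ξ⁻¹) :=
    integrableOn_rho_mul (by linarith) (hcontM.mono (Ioo_subset_Ioo le_rfl (by linarith)))
      (fun x hx => habs x ⟨hx.1, by rcases hx with ⟨_, h2⟩; linarith⟩) hh hM
  have II2 : IntervalIntegrable (fun x => ρ0 x * h x) volume (-ξ⁻¹) 0 :=
    integrableOn_rho_mul (by linarith) (hcontM.mono (Ioo_subset_Ioo (by linarith) le_rfl))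
      (fun x hx => habs x ⟨by rcases hx with ⟨h1, _⟩; linarith, by rcases hx with ⟨_, h2⟩; linarith⟩)
      hh hM
  have II3 : IntervalIntegrable (fun x => ρ0 x * h x) volume 0 ξ⁻¹ :=
    integrableOn_rho_mul (by linarith) (hcontP.mono (Ioo_subset_Ioo le_rfl (by linarith)))
      (fun x hx => habs x ⟨by rcases hx with ⟨h1, _⟩; linarith, by rcases hx with ⟨_, h2⟩; linarith⟩)
      hh hM
  have II4 : IntervalIntegrable (fun x => ρ0 x * h x) volume ξ⁻¹ ℓ :=
    integrableOn_rho_mul (by linarith) (hcontP.mono (Ioo_subset_Ioo (by linarith) le_rfl))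
      (fun x hx => habs x ⟨by rcases hx with ⟨h1, _⟩; linarith, by rcases hx with ⟨_, h2⟩; linarith⟩)
      hh hM
  refine ⟨II2, II3, ?_⟩
  have z1 : (∫ x in (-m)..(-ξ⁻¹), ρ0 x * h x) = 0 := by
    rw [integral_congr (g := fun _ => (0:ℝ)) ?_, intervalIntegral.integral_zero]
    intro x hx
    rw [uIcc_of_le (by linarith : -m ≤ -ξ⁻¹), mem_Icc] at hx
    have : ξ⁻¹ ≤ |x| := by rw [abs_of_nonpos (by linarith [hx.2])]; linarith [hx.2]
    simp [hvan x this]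
  have z4 : (∫ x in ξ⁻¹..ℓ, ρ0 x * h x) = 0 := by
    rw [integral_congr (g := fun _ => (0:ℝ)) ?_, intervalIntegral.integral_zero]
    intro x hx
    rw [uIcc_of_le (by linarith : ξ⁻¹ ≤ ℓ), mem_Icc] at hx
    have : ξ⁻¹ ≤ |x| := by rw [abs_of_nonneg (by linarith [hx.1])]; linarith [hx.1]
    simp [hvan x this]
  have e1 := integral_add_adjacent_intervals II1 II2
  have e2 := integral_add_adjacent_intervals II3 II4
  have e3 := integral_add_adjacent_intervals (II1.trans II2) (II3.trans II4)
  rw [← e3, ← e1, ← e2, z1, z4]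
  ring

lemma abs_max_le (s : ℝ) : |max s 0| ≤ |s| := by
  rcases le_or_gt s 0 with h | h
  · simp [max_eq_right h]
  · simp [max_eq_left h.le]

/-- derivative of `t ↦ (max t 0)^2`. -/
lemma hasDerivAt_sqmax (t : ℝ) :
    HasDerivAt (fun t : ℝ => (max t 0) ^ 2) (2 * max t 0) t := by
  rcases lt_trichotomy t 0 with ht | rfl | ht
  · have h : (fun t : ℝ => (max t 0) ^ 2) =ᶠ[nhds t] (fun _ => (0:ℝ)) := by
      filter_upwards [Iio_mem_nhds ht] with s hs
      simp [max_eq_right (le_of_lt (mem_Iio.1 hs))]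
    have h0 : HasDerivAt (fun _ : ℝ => (0:ℝ)) 0 t := hasDerivAt_const _ _
    simpa [max_eq_right ht.le] using h0.congr_of_eventuallyEq h
  · -- t = 0
    rw [hasDerivAt_iff_tendsto_slope]
    have hb : ∀ s : ℝ, ‖slope (fun t : ℝ => (max t 0) ^ 2) 0 s‖ ≤ ‖s‖ := by
      intro s
      rcases eq_or_ne s 0 with rfl | hs
      · simp [slope]
      · have : slope (fun t : ℝ => (max t 0) ^ 2) 0 s = (max s 0)^2 / s := by
          simp [slope, div_eq_inv_mul]
        rw [this]
        rw [norm_div]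
        rw [div_le_iff₀ (norm_pos_iff.mpr hs)]
        have h1 : ‖(max s 0)^2‖ = |max s 0| * |max s 0| := by
          rw [Real.norm_eq_abs, abs_pow]; ring
        rw [h1]
        have := abs_max_le s
        calc |max s 0| * |max s 0| ≤ |s| * |s| :=
              mul_le_mul this this (abs_nonneg _) (abs_nonneg _)
          _ = ‖s‖ * ‖s‖ := by simp [Real.norm_eq_abs]
    have : Filter.Tendsto (fun s : ℝ => s) (nhdsWithin 0 {(0:ℝ)}ᶜ) (nhds 0) :=
      Filter.Tendsto.mono_left Filter.tendsto_id nhdsWithin_le_nhds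
    have hT := squeeze_zero_norm hb (by simpa only [norm_zero] using this.norm)
    simpa using hT
  · have h : (fun t : ℝ => (max t 0) ^ 2) =ᶠ[nhds t] (fun s => s ^ 2) := by
      filter_upwards [Ioi_mem_nhds ht] with s hs
      simp [max_eq_left (le_of_lt (mem_Ioi.1 hs))]
    have h2 : HasDerivAt (fun s : ℝ => s ^ 2) (2 * t) t := by
      simpa using hasDerivAt_pow 2 t
    simpa [max_eq_left ht.le] using h2.congr_of_eventuallyEq h

noncomputable def tentU (ξ x : ℝ) : ℝ := max (1 - ξ * |x|) 0
noncomputable def tentPsi (ξ x : ℝ) : ℝ := (tentU ξ x) ^ 2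
noncomputable def tentPhi (ξ x : ℝ) : ℝ := (if 0 < x then 2 else -2) * tentU ξ x

lemma tentU_nonneg (ξ x : ℝ) : 0 ≤ tentU ξ x := le_max_right _ _

lemma tentU_le_one {ξ : ℝ} (hξ : 0 ≤ ξ) (x : ℝ) : tentU ξ x ≤ 1 := by
  unfold tentU
  have : 1 - ξ * |x| ≤ 1 := by nlinarith [abs_nonneg x]
  exact max_le this zero_le_one

lemma continuous_tentU (ξ : ℝ) : Continuous (tentU ξ) := by
  unfold tentU; fun_prop

lemma tentU_eq_zero {ξ x : ℝ} (hξ : 0 < ξ) (h : ξ⁻¹ ≤ |x|) : tentU ξ x = 0 := by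
  unfold tentU
  have : (1:ℝ) ≤ ξ * |x| := by
    calc (1:ℝ) = ξ * ξ⁻¹ := by field_simp
    _ ≤ ξ * |x| := by exact mul_le_mul_of_nonneg_left h hξ.le
  exact max_eq_right (by linarith)

lemma tentU_of_mem_pos {ξ x : ℝ} (h0 : 0 ≤ x) (h1 : x ≤ ξ⁻¹) (hξ : 0 < ξ) :
    tentU ξ x = 1 - ξ * x := by
  unfold tentU
  rw [abs_of_nonneg h0]
  refine max_eq_left ?_
  have : ξ * x ≤ ξ * ξ⁻¹ := mul_le_mul_of_nonneg_left h1 hξ.le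
  rw [mul_inv_cancel₀ hξ.ne'] at this
  linarith

lemma tentU_of_mem_neg {ξ x : ℝ} (h0 : x ≤ 0) (h1 : -ξ⁻¹ ≤ x) (hξ : 0 < ξ) :
    tentU ξ x = 1 + ξ * x := by
  unfold tentU
  rw [abs_of_nonpos h0]
  have h2 : ξ * (-x) ≤ ξ * ξ⁻¹ := mul_le_mul_of_nonneg_left (by linarith) hξ.le
  rw [mul_inv_cancel₀ hξ.ne'] at h2
  have : 1 - ξ * -x = 1 + ξ * x := by ring
  rw [this] at *
  refine max_eq_left (by nlinarith)

lemma hasDerivAt_tentPsi_pos {ξ x : ℝ} (hx : 0 < x) :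
    HasDerivAt (tentPsi ξ) (-(2 * ξ * tentU ξ x)) x := by
  have hinner : HasDerivAt (fun y : ℝ => 1 - ξ * |y|) (-ξ) x := by
    have h1 : HasDerivAt (fun y : ℝ => 1 - ξ * y) (-ξ) x := by
      simpa using ((hasDerivAt_id x).const_mul ξ).const_sub 1
    refine h1.congr_of_eventuallyEq ?_
    filter_upwards [Ioi_mem_nhds hx] with s hs
    rw [abs_of_pos (mem_Ioi.1 hs)]
  have hcomp := (hasDerivAt_sqmax (1 - ξ * |x|)).comp x hinner
  have heq : ((fun t : ℝ => (max t 0) ^ 2) ∘ fun y : ℝ => 1 - ξ * |y|) = tentPsi ξ := rfl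
  rw [heq] at hcomp
  refine hcomp.congr_deriv ?_
  unfold tentU; ring

lemma hasDerivAt_tentPsi_neg {ξ x : ℝ} (hx : x < 0) :
    HasDerivAt (tentPsi ξ) (2 * ξ * tentU ξ x) x := by
  have hinner : HasDerivAt (fun y : ℝ => 1 - ξ * |y|) ξ x := by
    have h1 : HasDerivAt (fun y : ℝ => 1 + ξ * y) ξ x := by
      simpa using ((hasDerivAt_id x).const_mul ξ).const_add 1
    refine h1.congr_of_eventuallyEq ?_
    filter_upwards [Iio_mem_nhds hx] with s hs
    rw [abs_of_neg (mem_Iio.1 hs)]; ring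
  have hcomp := (hasDerivAt_sqmax (1 - ξ * |x|)).comp x hinner
  have heq : ((fun t : ℝ => (max t 0) ^ 2) ∘ fun y : ℝ => 1 - ξ * |y|) = tentPsi ξ := rfl
  rw [heq] at hcomp
  refine hcomp.congr_deriv ?_
  unfold tentU; ring

lemma measurable_tentPhi (ξ : ℝ) : Measurable (tentPhi ξ) := by
  unfold tentPhi
  exact (Measurable.ite (measurableSet_Ioi (a := (0:ℝ))) measurable_const measurable_const).mul
    (continuous_tentU ξ).measurable

lemma abs_tentPhi_le {ξ : ℝ} (hξ : 0 ≤ ξ) (x : ℝ) : |tentPhi ξ x| ≤ 2 := by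
  unfold tentPhi
  rw [abs_mul]
  have h1 : |if 0 < x then (2:ℝ) else -2| = 2 := by split <;> simp
  rw [h1, abs_of_nonneg (tentU_nonneg ξ x)]
  nlinarith [tentU_le_one hξ x, tentU_nonneg ξ x]

lemma integral_tentU_pow_pos {ξ : ℝ} (hξ : 0 < ξ) (n : ℕ) :
    ∫ x in (0:ℝ)..ξ⁻¹, (tentU ξ x) ^ n = 1 / ((n + 1) * ξ) := by
  have ha : (0:ℝ) ≤ ξ⁻¹ := by positivity
  have hcongr : EqOn (fun x => (tentU ξ x) ^ n) (fun x => (1 - ξ * x) ^ n) (uIcc (0:ℝ) ξ⁻¹) := by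
    intro x hx
    rw [uIcc_of_le ha, mem_Icc] at hx
    simp only
    rw [tentU_of_mem_pos hx.1 hx.2 hξ]
  rw [integral_congr hcongr]
  have hderiv : ∀ x ∈ uIcc (0:ℝ) ξ⁻¹, HasDerivAt
      (fun x : ℝ => -(1 / ((n + 1) * ξ)) * (1 - ξ * x) ^ (n + 1)) ((1 - ξ * x) ^ n) x := by
    intro x _
    have h1 : HasDerivAt (fun x : ℝ => 1 - ξ * x) (-ξ) x := by
      simpa using ((hasDerivAt_id x).const_mul ξ).const_sub 1
    have h2 := (h1.pow (n + 1)).const_mul (-(1 / ((n + 1) * ξ)))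
    refine h2.congr_deriv ?_
    have hn : ((n:ℝ) + 1) ≠ 0 := by positivity
    rw [Nat.add_sub_cancel]; push_cast
    field_simp
  rw [integral_eq_sub_of_hasDerivAt hderiv ((Continuous.intervalIntegrable (by fun_prop)) _ _)]
  have h0 : 1 - ξ * ξ⁻¹ = 0 := by rw [mul_inv_cancel₀ hξ.ne']; ring
  rw [h0]
  simp

lemma integral_tentU_pow_neg {ξ : ℝ} (hξ : 0 < ξ) (n : ℕ) :
    ∫ x in (-ξ⁻¹)..(0:ℝ), (tentU ξ x) ^ n = 1 / ((n + 1) * ξ) := by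
  have ha : (-ξ⁻¹:ℝ) ≤ 0 := by simp [le_of_lt (inv_pos.mpr hξ)]
  have hcongr : EqOn (fun x => (tentU ξ x) ^ n) (fun x => (1 + ξ * x) ^ n) (uIcc (-ξ⁻¹) (0:ℝ)) := by
    intro x hx
    rw [uIcc_of_le ha, mem_Icc] at hx
    simp only
    rw [tentU_of_mem_neg hx.2 hx.1 hξ]
  rw [integral_congr hcongr]
  have hderiv : ∀ x ∈ uIcc (-ξ⁻¹) (0:ℝ), HasDerivAt
      (fun x : ℝ => (1 / ((n + 1) * ξ)) * (1 + ξ * x) ^ (n + 1)) ((1 + ξ * x) ^ n) x := by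
    intro x _
    have h1 : HasDerivAt (fun x : ℝ => 1 + ξ * x) ξ x := by
      simpa using ((hasDerivAt_id x).const_mul ξ).const_add 1
    have h2 := (h1.pow (n + 1)).const_mul ((1 / ((n + 1) * ξ)))
    refine h2.congr_deriv ?_
    have hn : ((n:ℝ) + 1) ≠ 0 := by positivity
    rw [Nat.add_sub_cancel]; push_cast
    field_simp
  rw [integral_eq_sub_of_hasDerivAt hderiv ((Continuous.intervalIntegrable (by fun_prop)) _ _)]
  have h0 : 1 + ξ * -ξ⁻¹ = 0 := by rw [mul_neg, mul_inv_cancel₀ hξ.ne']; ring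
  rw [h0]
  simp

set_option maxHeartbeats 4000000 in
lemma test_element {m ℓ g c C q Q' rhoP rhoM : ℝ} {ρ0 Q : ℝ → ℝ}
    (hm : 0 < m) (hℓ : 0 < ℓ) (hg : 0 < g) (hjump : rhoM < rhoP)
    (hc : 0 < c) (hq : 0 < q)
    (hρbd : ∀ x ∈ Ioo (-m) ℓ, c ≤ ρ0 x ∧ ρ0 x ≤ C)
    (hQbd : ∀ x ∈ Ioo (-m) ℓ, q ≤ Q x ∧ Q x ≤ Q')
    (hcontM : ContinuousOn ρ0 (Ioo (-m) 0)) (hcontP : ContinuousOn ρ0 (Ioo 0 ℓ))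
    (hode : ∀ x ∈ Ioo (-m) ℓ, x ≠ 0 → HasDerivAt ρ0 (-g * ρ0 x / Q x) x)
    (hlimP : Tendsto ρ0 (nhdsWithin 0 (Ioi 0)) (nhds rhoP))
    (hlimM : Tendsto ρ0 (nhdsWithin 0 (Iio 0)) (nhds rhoM))
    (ξ : ℝ) (hξ1 : 1 ≤ ξ) (ham : ξ⁻¹ ≤ m) (hal : ξ⁻¹ ≤ ℓ)
    (hKa : 2 * (g * C / q) * ξ⁻¹ ≤ (rhoP - rhoM) / 2) :
    ∃ e ∈ RTEnergyValues m ℓ g ξ ρ0 Q,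
      e ≤ -(3 * g * (rhoP - rhoM) / (20 * C)) * ξ := by
  have hξ0 : (0:ℝ) < ξ := by linarith
  have ha : (0:ℝ) < ξ⁻¹ := inv_pos.mpr hξ0
  have hC : 0 < C := by
    have hz : ℓ/2 ∈ Ioo (-m) ℓ := ⟨by linarith, by linarith⟩
    rcases hρbd _ hz with ⟨h1, h2⟩; linarith
  set K := g * C / q with hK_def
  have hK0 : 0 ≤ K := by rw [hK_def]; positivity
  set d := rhoP - rhoM with hd_def
  have hd0 : 0 < d := by rw [hd_def]; linarith
  set u := tentU ξ with hu_def
  have hu0 : ∀ x, 0 ≤ u x := tentU_nonneg ξ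
  have hu1 : ∀ x, u x ≤ 1 := tentU_le_one hξ0.le
  have huc : Continuous u := continuous_tentU ξ
  have huvan : ∀ y : ℝ, ξ⁻¹ ≤ |y| → u y = 0 := fun y hy => tentU_eq_zero hξ0 hy
  have hCne : C ≠ 0 := ne_of_gt hC
  have hξne : ξ ≠ 0 := ne_of_gt hξ0
  have hψc : Continuous (tentPsi ξ) := by unfold tentPsi; exact (huc.pow 2)
  have hφm : Measurable (tentPhi ξ) := measurable_tentPhi ξ
  have hψm : Measurable (tentPsi ξ) := hψc.measurable
  have hphi2 : ∀ x, (tentPhi ξ x)^2 = 4 * (u x)^2 := by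
    intro x; unfold tentPhi; split <;> ring
  have hpsival : ∀ x, tentPsi ξ x = (u x)^2 := fun x => rfl
  have hSpos : ∀ x : ℝ, 0 < x → tentPsi ξ x * tentPhi ξ x = 2 * (u x)^3 := by
    intro x hx; unfold tentPsi tentPhi; rw [if_pos hx]; ring
  have hSneg : ∀ x : ℝ, x ≤ 0 → tentPsi ξ x * tentPhi ξ x = -(2 * (u x)^3) := by
    intro x hx; unfold tentPsi tentPhi; rw [if_neg (by linarith)]; ring
  -- restricted hypotheses for rho_near
  have hbdP : ∀ x ∈ Ioo (0:ℝ) ℓ, ρ0 x ≤ C :=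
    fun x hx => (hρbd x ⟨by linarith [hx.1], hx.2⟩).2
  have hposP : ∀ x ∈ Ioo (0:ℝ) ℓ, 0 ≤ ρ0 x :=
    fun x hx => le_trans hc.le (hρbd x ⟨by linarith [hx.1], hx.2⟩).1
  have hQP : ∀ x ∈ Ioo (0:ℝ) ℓ, q ≤ Q x :=
    fun x hx => (hQbd x ⟨by linarith [hx.1], hx.2⟩).1
  have hodeP : ∀ x ∈ Ioo (0:ℝ) ℓ, HasDerivAt ρ0 (-g * ρ0 x / Q x) x :=
    fun x hx => hode x ⟨by linarith [hx.1], hx.2⟩ (ne_of_gt hx.1)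
  have hbdM : ∀ x ∈ Ioo (-m) (0:ℝ), ρ0 x ≤ C :=
    fun x hx => (hρbd x ⟨hx.1, by linarith [hx.2]⟩).2
  have hposM : ∀ x ∈ Ioo (-m) (0:ℝ), 0 ≤ ρ0 x :=
    fun x hx => le_trans hc.le (hρbd x ⟨hx.1, by linarith [hx.2]⟩).1
  have hQM : ∀ x ∈ Ioo (-m) (0:ℝ), q ≤ Q x :=
    fun x hx => (hQbd x ⟨hx.1, by linarith [hx.2]⟩).1
  have hodeM : ∀ x ∈ Ioo (-m) (0:ℝ), HasDerivAt ρ0 (-g * ρ0 x / Q x) x :=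
    fun x hx => hode x ⟨hx.1, by linarith [hx.2]⟩ (ne_of_lt hx.2)
  have hnearP := rho_near_right hg hq hK_def hK0 hbdP hposP hQP hodeP hlimP
  have hnearM := rho_near_left hg hq hK_def hK0 hbdM hposM hQM hodeM hlimM
  -- basic integrals
  have I2p := integral_tentU_pow_pos hξ0 2
  have I2m := integral_tentU_pow_neg hξ0 2
  have I3p := integral_tentU_pow_pos hξ0 3
  have I3m := integral_tentU_pow_neg hξ0 3
  norm_num at I2p I2m I3p I3m
  -- ==== constraint integral ====
  set h2 : ℝ → ℝ := fun x => (tentPhi ξ x)^2 + (tentPsi ξ x)^2 with hh2_def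
  have hh2m : Measurable h2 := (hφm.pow_const 2).add (hψm.pow_const 2)
  have hh2bd : ∀ x, |h2 x| ≤ 5 := by
    intro x
    have := hphi2 x
    have h1 := hu0 x; have h2' := hu1 x
    rw [hh2_def]
    simp only
    rw [hphi2 x, hpsival x, abs_of_nonneg (by positivity)]
    have hsq : u x ^ 2 ≤ 1 := by nlinarith
    have hsq2 : (u x ^ 2)^2 ≤ 1 := by nlinarith [sq_nonneg (u x)]
    linarith
  have hh2van : ∀ x : ℝ, ξ⁻¹ ≤ |x| → h2 x = 0 := by
    intro x hx
    rw [hh2_def]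
    simp only
    rw [hphi2 x, hpsival x, huvan x hx]
    ring
  obtain ⟨IIJm, IIJp, hsplitJ⟩ := rho_mul_split hm hℓ hc hξ0 ham hal hρbd hcontM hcontP
    hh2m hh2bd hh2van
  have hh2lb : ∀ x, 4 * (u x)^2 ≤ h2 x := by
    intro x; rw [hh2_def]; simp only; rw [hphi2 x, hpsival x]; nlinarith [hu0 x]
  have hh2ub : ∀ x, h2 x ≤ 5 * (u x)^2 := by
    intro x; rw [hh2_def]; simp only; rw [hphi2 x, hpsival x]
    have h1 : u x^2 ≤ 1 := by nlinarith [hu0 x, hu1 x]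
    nlinarith [h1, sq_nonneg (u x)]
  -- bounds on the pieces
  have hmemP : ∀ x ∈ Ioo (0:ℝ) ξ⁻¹, x ∈ Ioo (-m) ℓ :=
    fun x hx => ⟨by linarith [hx.1], by linarith [hx.2]⟩
  have hmemM : ∀ x ∈ Ioo (-ξ⁻¹) (0:ℝ), x ∈ Ioo (-m) ℓ :=
    fun x hx => ⟨by linarith [hx.1], by linarith [hx.2]⟩
  have hJp_up : (∫ x in (0:ℝ)..ξ⁻¹, ρ0 x * h2 x) ≤ C * 5 * (ξ⁻¹ * (1/3)) := by
    have hcmp := integral_mono_ae_restrict (le_of_lt ha) IIJp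
      ((continuous_const.mul (huc.pow 2)).intervalIntegrable 0 ξ⁻¹ :
        IntervalIntegrable (fun x => C * 5 * (u x)^2) volume 0 ξ⁻¹)
      (ae_restrict_Icc_of_Ioo (fun x hx => ?_))
    · simp only [Pi.mul_apply, Pi.pow_apply] at hcmp; rw [intervalIntegral.integral_const_mul, I2p] at hcmp
      exact hcmp
    · rcases hρbd x (hmemP x hx) with ⟨hb1, hb2⟩
      calc ρ0 x * h2 x ≤ C * (5 * (u x)^2) := by
            nlinarith [hh2ub x, hh2lb x, hu0 x, sq_nonneg (u x)]
        _ = C * 5 * (u x)^2 := by ring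
  have hJm_up : (∫ x in (-ξ⁻¹)..(0:ℝ), ρ0 x * h2 x) ≤ C * 5 * (ξ⁻¹ * (1/3)) := by
    have hcmp := integral_mono_ae_restrict (by linarith : -ξ⁻¹ ≤ (0:ℝ)) IIJm
      ((continuous_const.mul (huc.pow 2)).intervalIntegrable _ _ :
        IntervalIntegrable (fun x => C * 5 * (u x)^2) volume (-ξ⁻¹) 0)
      (ae_restrict_Icc_of_Ioo (fun x hx => ?_))
    · simp only [Pi.mul_apply, Pi.pow_apply] at hcmp; rw [intervalIntegral.integral_const_mul, I2m] at hcmp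
      exact hcmp
    · rcases hρbd x (hmemM x hx) with ⟨hb1, hb2⟩
      calc ρ0 x * h2 x ≤ C * (5 * (u x)^2) := by
            nlinarith [hh2ub x, hh2lb x, hu0 x, sq_nonneg (u x)]
        _ = C * 5 * (u x)^2 := by ring
  have hJp_lo : c * 4 * (ξ⁻¹ * (1/3)) ≤ ∫ x in (0:ℝ)..ξ⁻¹, ρ0 x * h2 x := by
    have hcmp := integral_mono_ae_restrict (le_of_lt ha)
      ((continuous_const.mul (huc.pow 2)).intervalIntegrable 0 ξ⁻¹ :
        IntervalIntegrable (fun x => c * 4 * (u x)^2) volume 0 ξ⁻¹) IIJp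
      (ae_restrict_Icc_of_Ioo (fun x hx => ?_))
    · simp only [Pi.mul_apply, Pi.pow_apply] at hcmp; rw [intervalIntegral.integral_const_mul, I2p] at hcmp
      exact hcmp
    · rcases hρbd x (hmemP x hx) with ⟨hb1, hb2⟩
      calc c * 4 * (u x)^2 = c * (4 * (u x)^2) := by ring
        _ ≤ ρ0 x * h2 x := by nlinarith [hh2lb x, sq_nonneg (u x), hh2ub x, hu0 x]
  have hJm_lo : (0:ℝ) ≤ ∫ x in (-ξ⁻¹)..(0:ℝ), ρ0 x * h2 x := by
    have hcmp := integral_mono_ae_restrict (by linarith : -ξ⁻¹ ≤ (0:ℝ))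
      ((continuous_const.intervalIntegrable _ _ :
        IntervalIntegrable (fun _ => (0:ℝ)) volume (-ξ⁻¹) 0)) IIJm
      (ae_restrict_Icc_of_Ioo (fun x hx => ?_))
    · simpa using hcmp
    · rcases hρbd x (hmemM x hx) with ⟨hb1, hb2⟩
      have := hh2lb x
      show (0:ℝ) ≤ ρ0 x * h2 x
      nlinarith [sq_nonneg (u x)]
  -- J
  set J := RTConstraint m ℓ ρ0 (tentPhi ξ) (tentPsi ξ) with hJ_def
  have hJ_eq : J = (1/2) * ((∫ x in (-ξ⁻¹)..(0:ℝ), ρ0 x * h2 x)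
      + ∫ x in (0:ℝ)..ξ⁻¹, ρ0 x * h2 x) := by
    rw [hJ_def, RTConstraint, hsplitJ]
  have hJub : J ≤ 5 * C / 3 * ξ⁻¹ := by
    have he : C * 5 * (ξ⁻¹ * (1/3)) = 5 * C / 3 * ξ⁻¹ := by ring
    rw [hJ_eq]; nlinarith [hJp_up, hJm_up]
  have hJlb : 2 * c * (ξ⁻¹ * (1/3)) ≤ J := by
    rw [hJ_eq]; nlinarith [hJp_lo, hJm_lo]
  have hJpos : 0 < J := lt_of_lt_of_le (by positivity) hJlb
  -- ==== W integral ====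
  set S : ℝ → ℝ := fun x => tentPsi ξ x * tentPhi ξ x with hS_def
  have hSm : Measurable S := hψm.mul hφm
  have hSbd : ∀ x, |S x| ≤ 2 := by
    intro x
    rw [hS_def]
    simp only
    rw [abs_mul]
    have h1 : |tentPsi ξ x| ≤ 1 := by
      rw [hpsival x, abs_of_nonneg (by positivity)]
      nlinarith [hu0 x, hu1 x]
    have h2' := abs_tentPhi_le hξ0.le x
    nlinarith [abs_nonneg (tentPsi ξ x), abs_nonneg (tentPhi ξ x)]
  have hSvan : ∀ x : ℝ, ξ⁻¹ ≤ |x| → S x = 0 := by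
    intro x hx
    rw [hS_def]
    simp only
    rw [hpsival x, huvan x hx]
    ring
  obtain ⟨IIWm, IIWp, hsplitW⟩ := rho_mul_split hm hℓ hc hξ0 ham hal hρbd hcontM hcontP
    hSm hSbd hSvan
  have hWp : (rhoP - K * ξ⁻¹) * 2 * (ξ⁻¹ * (1/4)) ≤ ∫ x in (0:ℝ)..ξ⁻¹, ρ0 x * S x := by
    have hcmp := integral_mono_ae_restrict (le_of_lt ha)
      ((continuous_const.mul (huc.pow 3)).intervalIntegrable 0 ξ⁻¹ :
        IntervalIntegrable (fun x => (rhoP - K * ξ⁻¹) * 2 * (u x)^3) volume 0 ξ⁻¹) IIWp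
      (ae_restrict_Icc_of_Ioo (fun x hx => ?_))
    · simp only [Pi.mul_apply, Pi.pow_apply] at hcmp; rw [intervalIntegral.integral_const_mul, I3p] at hcmp
      exact hcmp
    · have hxl : x ∈ Ioo (0:ℝ) ℓ := ⟨hx.1, by linarith [hx.2]⟩
      have hn := hnearP x hxl
      have hSx : S x = 2 * (u x)^3 := hSpos x hx.1
      show (rhoP - K * ξ⁻¹) * 2 * (u x)^3 ≤ ρ0 x * S x
      rw [hSx]
      have hρx : rhoP - K * ξ⁻¹ ≤ ρ0 x := by nlinarith [hx.1, hx.2]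
      have hu3 : (0:ℝ) ≤ 2 * (u x)^3 := by nlinarith [pow_nonneg (hu0 x) 3]
      calc (rhoP - K * ξ⁻¹) * 2 * (u x)^3 = (rhoP - K * ξ⁻¹) * (2 * (u x)^3) := by ring
        _ ≤ ρ0 x * (2 * (u x)^3) := mul_le_mul_of_nonneg_right hρx hu3
  have hWm : -((rhoM + K * ξ⁻¹) * 2 * (ξ⁻¹ * (1/4))) ≤ ∫ x in (-ξ⁻¹)..(0:ℝ), ρ0 x * S x := by
    have hcmp := integral_mono_ae_restrict (by linarith : -ξ⁻¹ ≤ (0:ℝ))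
      ((continuous_const.mul (huc.pow 3)).intervalIntegrable _ _ :
        IntervalIntegrable (fun x => -((rhoM + K * ξ⁻¹) * 2) * (u x)^3) volume (-ξ⁻¹) 0) IIWm
      (ae_restrict_Icc_of_Ioo (fun x hx => ?_))
    · simp only [Pi.mul_apply, Pi.pow_apply] at hcmp; rw [intervalIntegral.integral_const_mul, I3m] at hcmp
      have he : -((rhoM + K * ξ⁻¹) * 2 * (ξ⁻¹ * (1/4))) = -((rhoM + K * ξ⁻¹) * 2) * (ξ⁻¹ * (1/4)) := by ring
      rw [he]; exact hcmp
    · have hxl : x ∈ Ioo (-m) (0:ℝ) := ⟨by linarith [hx.1], hx.2⟩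
      have hn := hnearM x hxl
      have hSx : S x = -(2 * (u x)^3) := hSneg x hx.2.le
      show -((rhoM + K * ξ⁻¹) * 2) * (u x)^3 ≤ ρ0 x * S x
      rw [hSx]
      have hρx : ρ0 x ≤ rhoM + K * ξ⁻¹ := by nlinarith [hx.1, hx.2]
      have hu3 : (0:ℝ) ≤ 2 * (u x)^3 := by nlinarith [pow_nonneg (hu0 x) 3]
      have := mul_le_mul_of_nonneg_right hρx hu3
      nlinarith
  set W := ∫ x in (-m)..ℓ, ρ0 x * S x with hW_def
  have hWlb : d * (ξ⁻¹ * (1/4)) ≤ W := by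
    rw [hsplitW]
    have h1 : 2 * K * ξ⁻¹ ≤ d / 2 := by rw [hd_def]; exact hKa
    nlinarith [hWp, hWm, mul_le_mul_of_nonneg_right h1 ha.le]
  -- ==== test functions ====
  set t := (Real.sqrt J)⁻¹ with ht_def
  have ht2 : t^2 = J⁻¹ := by
    rw [ht_def, inv_pow, Real.sq_sqrt hJpos.le]
  have ht2pos : 0 < t^2 := by rw [ht2]; exact inv_pos.mpr hJpos
  set Φ : ℝ → ℝ := fun x => t * tentPhi ξ x with hΦ_def
  set Ψ : ℝ → ℝ := fun x => t * tentPsi ξ x with hΨ_def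
  have humm : u (-m) = 0 := tentU_eq_zero hξ0 (by rw [abs_of_nonpos (by linarith)]; linarith)
  have hull : u ℓ = 0 := tentU_eq_zero hξ0 (by rw [abs_of_nonneg (by linarith)]; linarith)
  have hderivΨ : ∀ x, deriv Ψ x = t * deriv (tentPsi ξ) x := by
    intro x; rw [hΨ_def]; exact deriv_const_mul_field t
  have hdpos : ∀ x : ℝ, 0 < x → deriv (tentPsi ξ) x = -(2 * ξ * u x) :=
    fun x hx => (hasDerivAt_tentPsi_pos hx).deriv
  have hdneg : ∀ x : ℝ, x < 0 → deriv (tentPsi ξ) x = 2 * ξ * u x :=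
    fun x hx => (hasDerivAt_tentPsi_neg hx).deriv
  have hdbd : ∀ x : ℝ, x ≠ 0 → |deriv (tentPsi ξ) x| ≤ 2 * ξ := by
    intro x hx
    rcases lt_or_gt_of_ne hx with h | h
    · rw [hdneg x h, abs_of_nonneg (mul_nonneg (by positivity) (hu0 x))]
      nlinarith [hu1 x, hu0 x]
    · rw [hdpos x h, abs_neg, abs_of_nonneg (mul_nonneg (by positivity) (hu0 x))]
      nlinarith [hu1 x, hu0 x]
  have h0ne : ∀ᵐ x : ℝ ∂volume, x ≠ 0 := by
    rw [ae_iff]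
    have : {x : ℝ | ¬ x ≠ 0} = {0} := by ext y; simp
    rw [this]
    exact measure_singleton 0
  have hadm : RTAdm m ℓ Φ Ψ := by
    refine ⟨?_, ?_, ?_, ?_, ?_, ?_⟩
    · exact (continuous_const.mul hψc).continuousOn
    · rw [hΨ_def]; simp only; rw [hpsival, humm]; ring
    · rw [hΨ_def]; simp only; rw [hpsival, hull]; ring
    · intro x hx hx0
      rcases lt_or_gt_of_ne hx0 with h | h
      · exact ((hasDerivAt_tentPsi_neg h).differentiableAt).const_mul t
      · exact ((hasDerivAt_tentPsi_pos h).differentiableAt).const_mul t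
    · have : (fun x => (Φ x)^2) = fun x => t^2 * (4 * (u x)^2) := by
        funext x; rw [hΦ_def]; simp only; rw [mul_pow, hphi2 x]
      rw [this]
      exact ((continuous_const.mul (continuous_const.mul (huc.pow 2))).intervalIntegrable _ _ :
        IntervalIntegrable (fun x => t^2 * (4 * (u x)^2)) volume _ _)
    · rw [intervalIntegrable_iff_integrableOn_Ioo_of_le (by linarith)]
      apply Integrable.mono' (g := fun _ => t^2 * (2*ξ)^2)
      · exact integrableOn_const measure_Ioo_lt_top.ne
      · exact ((measurable_deriv Ψ).pow_const 2).aestronglyMeasurable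
      · filter_upwards [ae_mono Measure.restrict_le_self h0ne] with x hx
        rw [Real.norm_eq_abs, hderivΨ x, mul_pow, abs_of_nonneg (by positivity)]
        have h1 := hdbd x hx
        have h2 : (deriv (tentPsi ξ) x)^2 ≤ (2*ξ)^2 := by
          rw [← sq_abs]
          exact pow_le_pow_left₀ (abs_nonneg _) h1 2
        nlinarith [sq_nonneg t]
  have hcon : RTConstraint m ℓ ρ0 Φ Ψ = 1 := by
    rw [RTConstraint]
    have heq : ∀ x : ℝ, ρ0 x * ((Φ x)^2 + (Ψ x)^2) = t^2 * (ρ0 x * h2 x) := by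
      intro x; rw [hΦ_def, hΨ_def, hh2_def]; simp only; ring
    simp only [heq]
    rw [intervalIntegral.integral_const_mul]
    have hJval : (∫ x in (-m)..ℓ, ρ0 x * h2 x) = 2 * J := by
      rw [hJ_eq, hsplitJ]; ring
    rw [hJval, ht2]
    field_simp
  -- energy value
  have hEval : RTEnergy m ℓ g ξ ρ0 Q Φ Ψ = -(g * ξ * (t^2 * W)) := by
    rw [RTEnergy]
    have hae : ∀ᵐ x ∂(volume : Measure ℝ), x ∈ Set.uIoc (-m) ℓ →
        Q x * ρ0 x * (deriv Ψ x + ξ * Φ x) ^ 2 - 2 * g * ρ0 x * ξ * Ψ x * Φ x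
          = (-(2*g*ξ) * t^2) * (ρ0 x * S x) := by
      filter_upwards [h0ne] with x hx _
      rcases lt_or_gt_of_ne hx with h | h
      · rw [hderivΨ x, hdneg x h, hΦ_def, hΨ_def, hS_def]
        simp only
        unfold tentPhi tentPsi
        rw [if_neg (by linarith)]
        ring
      · rw [hderivΨ x, hdpos x h, hΦ_def, hΨ_def, hS_def]
        simp only
        unfold tentPhi tentPsi
        rw [if_pos h]
        ring
    rw [integral_congr_ae hae, intervalIntegral.integral_const_mul, ← hW_def]
    ring
  refine ⟨RTEnergy m ℓ g ξ ρ0 Q Φ Ψ, ⟨Φ, Ψ, hadm, hcon, rfl⟩, ?_⟩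
  rw [hEval]
  -- final estimate
  have hAlb : 3 / (5 * C) * ξ ≤ t^2 := by
    rw [ht2]
    have h2' : (5 * C / 3 * ξ⁻¹)⁻¹ ≤ J⁻¹ := inv_anti₀ hJpos hJub
    have h3 : (5 * C / 3 * ξ⁻¹)⁻¹ = 3 / (5 * C) * ξ := by
      rw [mul_inv, inv_inv, inv_div]
    linarith [h2', h3.le, h3.ge]
  have s1 : g * ξ * (t^2 * (d * (ξ⁻¹ * (1/4)))) ≤ g * ξ * (t^2 * W) := by
    apply mul_le_mul_of_nonneg_left _ (by positivity)
    exact mul_le_mul_of_nonneg_left hWlb ht2pos.le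
  have s2 : g * ξ * (t^2 * (d * (ξ⁻¹ * (1/4)))) = g * d / 4 * t^2 := by
    have hxx : ξ * ξ⁻¹ = 1 := mul_inv_cancel₀ hξne
    calc g * ξ * (t^2 * (d * (ξ⁻¹ * (1/4)))) = ξ * ξ⁻¹ * (g * d / 4 * t^2) := by ring
      _ = g * d / 4 * t^2 := by rw [hxx]; ring
  have s3 : g * d / 4 * (3 / (5 * C) * ξ) ≤ g * d / 4 * t^2 :=
    mul_le_mul_of_nonneg_left hAlb (by positivity)
  have s4 : g * d / 4 * (3 / (5 * C) * ξ) = 3 * g * d / (20 * C) * ξ := by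
    have h20 : ((20:ℝ) * C)⁻¹ = (5 * C)⁻¹ * (1/4) := by
      rw [show (20:ℝ) * C = 4 * (5 * C) by ring, mul_inv]
      ring
    simp only [div_eq_mul_inv]
    rw [h20]
    ring
  have : 3 * g * d / (20 * C) * ξ ≤ g * ξ * (t^2 * W) := by linarith
  rw [hd_def] at this
  linarith

set_option maxHeartbeats 1000000 in
/-- Growth of the variational eigenvalue: there are `C₀,C₁,C₂ > 0` (depending only on
`ρ₀±, P±, g, m, ℓ`) with `λ²(|ξ|) = -inf_𝒜 E ≥ C₁|ξ| - C₂` for `|ξ| ≥ C₀`; combined with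
`E ≥ -g|ξ|` this gives `0 < C ≤ λ(|ξ|)/√|ξ| ≤ √g` for all sufficiently large `|ξ|`. -/
theorem eigenvalue_growth
    (m ℓ g : ℝ) (hm : 0 < m) (hℓ : 0 < ℓ) (hg : 0 < g)
    (ρ0 Q : ℝ → ℝ) (rhoP rhoM : ℝ) (hjump : rhoM < rhoP)
    (c C q Q' : ℝ) (hc : 0 < c) (hq : 0 < q)
    (hρbd : ∀ x ∈ Ioo (-m) ℓ, c ≤ ρ0 x ∧ ρ0 x ≤ C)
    (hQbd : ∀ x ∈ Ioo (-m) ℓ, q ≤ Q x ∧ Q x ≤ Q')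
    (hcontM : ContinuousOn ρ0 (Ioo (-m) 0)) (hcontP : ContinuousOn ρ0 (Ioo 0 ℓ))
    (hQcontM : ContinuousOn Q (Ioo (-m) 0)) (hQcontP : ContinuousOn Q (Ioo 0 ℓ))
    (hode : ∀ x ∈ Ioo (-m) ℓ, x ≠ 0 → HasDerivAt ρ0 (-g * ρ0 x / Q x) x)
    (hlimP : Filter.Tendsto ρ0 (nhdsWithin 0 (Ioi 0)) (nhds rhoP))
    (hlimM : Filter.Tendsto ρ0 (nhdsWithin 0 (Iio 0)) (nhds rhoM)) :
    ∃ C0 C1 C2 : ℝ, 0 < C0 ∧ 0 < C1 ∧ 0 < C2 ∧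
      (∀ ξ : ℝ, C0 ≤ ξ →
        C1 * ξ - C2 ≤ -(sInf (RTEnergyValues m ℓ g ξ ρ0 Q)))
      ∧ ∃ Cr : ℝ, 0 < Cr ∧ ∀ ξ : ℝ, C0 ≤ ξ →
          Cr ≤ Real.sqrt (-(sInf (RTEnergyValues m ℓ g ξ ρ0 Q))) / Real.sqrt ξ
          ∧ Real.sqrt (-(sInf (RTEnergyValues m ℓ g ξ ρ0 Q))) / Real.sqrt ξ
              ≤ Real.sqrt g := by
  have hC : 0 < C := by
    have hz : ℓ/2 ∈ Ioo (-m) ℓ := ⟨by linarith, by linarith⟩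
    rcases hρbd _ hz with ⟨h1, h2⟩; linarith
  have hd0 : 0 < rhoP - rhoM := by linarith
  have hK0 : 0 ≤ g * C / q := by positivity
  set C0 : ℝ := m⁻¹ + ℓ⁻¹ + 4 * (g * C / q) / (rhoP - rhoM) + 1 with hC0_def
  set C1 : ℝ := 3 * g * (rhoP - rhoM) / (20 * C) with hC1_def
  have hC0pos : 0 < C0 := by rw [hC0_def]; positivity
  have hC1pos : 0 < C1 := by rw [hC1_def]; positivity
  have him : 0 < m⁻¹ := inv_pos.mpr hm
  have hil : 0 < ℓ⁻¹ := inv_pos.mpr hℓ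
  have hKd : 0 ≤ 4 * (g * C / q) / (rhoP - rhoM) := by positivity
  have key : ∀ ξ : ℝ, C0 ≤ ξ →
      C1 * ξ ≤ -(sInf (RTEnergyValues m ℓ g ξ ρ0 Q)) ∧
      -(sInf (RTEnergyValues m ℓ g ξ ρ0 Q)) ≤ g * ξ := by
    intro ξ hξ
    have hξ1 : 1 ≤ ξ := by rw [hC0_def] at hξ; linarith
    have hξ0 : 0 < ξ := by linarith
    have ham : ξ⁻¹ ≤ m := by
      have h1 : m⁻¹ ≤ ξ := by rw [hC0_def] at hξ; linarith
      have h2 := inv_anti₀ him h1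
      rwa [inv_inv] at h2
    have hal : ξ⁻¹ ≤ ℓ := by
      have h1 : ℓ⁻¹ ≤ ξ := by rw [hC0_def] at hξ; linarith
      have h2 := inv_anti₀ hil h1
      rwa [inv_inv] at h2
    have hKa : 2 * (g * C / q) * ξ⁻¹ ≤ (rhoP - rhoM) / 2 := by
      have h1 : 4 * (g * C / q) / (rhoP - rhoM) ≤ ξ := by rw [hC0_def] at hξ; linarith
      have h2 : 4 * (g * C / q) ≤ ξ * (rhoP - rhoM) := (div_le_iff₀ hd0).1 h1
      have h3 : 2 * (g * C / q) * ξ⁻¹ = 2 * (g * C / q) / ξ := (div_eq_mul_inv (2 * (g * C / q)) ξ).symm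
      rw [h3, div_le_div_iff₀ hξ0 (by norm_num : (0:ℝ) < 2)]
      nlinarith
    obtain ⟨e, he_mem, he_le⟩ := test_element hm hℓ hg hjump hc hq hρbd hQbd hcontM hcontP
      hode hlimP hlimM ξ hξ1 ham hal hKa
    have hlow := energy_lower hm hℓ hg hξ0 hc hq
      (fun x hx => (hρbd x hx).1) (fun x hx => (hQbd x hx).1)
    have hbdd : BddBelow (RTEnergyValues m ℓ g ξ ρ0 Q) := ⟨-(g * ξ), fun e' he' => hlow e' he'⟩
    have hsInf_le : sInf (RTEnergyValues m ℓ g ξ ρ0 Q) ≤ e := csInf_le hbdd he_mem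
    have hge : -(g * ξ) ≤ sInf (RTEnergyValues m ℓ g ξ ρ0 Q) := le_csInf ⟨e, he_mem⟩ hlow
    constructor
    · rw [hC1_def]; linarith
    · linarith
  refine ⟨C0, C1, 1, hC0pos, hC1pos, one_pos, ?_, Real.sqrt C1, Real.sqrt_pos.mpr hC1pos, ?_⟩
  · intro ξ hξ
    have k := key ξ hξ
    linarith [k.1]
  · intro ξ hξ
    have k := key ξ hξ
    have hξ0 : 0 < ξ := by
      have hξ1 : 1 ≤ ξ := by rw [hC0_def] at hξ; linarith
      linarith
    have hsξ : 0 < Real.sqrt ξ := Real.sqrt_pos.mpr hξ0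
    constructor
    · rw [le_div_iff₀ hsξ]
      calc Real.sqrt C1 * Real.sqrt ξ = Real.sqrt (C1 * ξ) := (Real.sqrt_mul hC1pos.le ξ).symm
        _ ≤ Real.sqrt (-(sInf (RTEnergyValues m ℓ g ξ ρ0 Q))) := Real.sqrt_le_sqrt k.1
    · rw [div_le_iff₀ hsξ]
      calc Real.sqrt (-(sInf (RTEnergyValues m ℓ g ξ ρ0 Q)))
          ≤ Real.sqrt (g * ξ) := Real.sqrt_le_sqrt k.2
        _ = Real.sqrt g * Real.sqrt ξ := Real.sqrt_mul hg.le ξ
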